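/- Let s ≥ 1 be an integer and let C be an ((s+1)², s+1, 2s+1)-suitable core. Then each symbol of [s+1] occurs as the first (leftmost) symbol of a row of C exactly s+1 times. -/

import Mathlib

/-- An `(N,v,t)`-suitable core: an `N × v` array, each of whose rows is a
permutation of `{1,…,v}` (modelled as `Fin v`, with `C i p` the symbol in
position `p` of row `i`), such that for every `s` with `0 ≤ s ≤ t-1`, every
symbol precedes every subset of `s` other symbols in at least `t - s` rows. -/
def IsSuitableCore (N v t : ℕ) (C : Fin N → Equiv.Perm (Fin v)) : Prop :=
  ∀ s : ℕ, s < t → ∀ σ : Fin v, ∀ S : Finset (Fin v), σ ∉ S → S.card = s →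
    t - s ≤ (Finset.univ.filter
      (fun i : Fin N => ∀ τ ∈ S, ((C i).symm σ : ℕ) < ((C i).symm τ : ℕ))).card

lemma first_iff (v : ℕ) (e : Equiv.Perm (Fin (v+1))) (k : Fin (v+1)) :
    (∀ τ ∈ Finset.univ.erase k, ((e.symm k : ℕ) < (e.symm τ : ℕ))) ↔ (e.symm k : ℕ) = 0 := by
  constructor
  · intro h
    by_contra h0
    -- 0 = e.symm τ for some τ; τ ≠ k since e.symm k ≠ 0
    set τ := e 0 with hτ
    have hsymm : e.symm τ = 0 := e.symm_apply_apply 0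
    have hne : τ ≠ k := by
      intro he
      rw [he] at hsymm
      exact h0 (by simp [hsymm])
    have := h τ (Finset.mem_erase.2 ⟨hne, Finset.mem_univ _⟩)
    rw [hsymm] at this
    simp at this
  · intro h τ hτ
    have hne : τ ≠ k := (Finset.mem_erase.1 hτ).1
    have : e.symm τ ≠ e.symm k := fun he => hne (e.symm.injective he)
    have : (e.symm τ : ℕ) ≠ (e.symm k : ℕ) := fun he => this (Fin.ext he)
    omega

/-- In an `((s+1)², s+1, 2s+1)`-suitable core, each symbol starts a row
exactly `s + 1` times. -/
theorem suitableCore_equidistribution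
    (s : ℕ) (hs : 1 ≤ s)
    (C : Fin ((s + 1) ^ 2) → Equiv.Perm (Fin (s + 1)))
    (hC : IsSuitableCore ((s + 1) ^ 2) (s + 1) (2 * s + 1) C)
    (k : Fin (s + 1)) :
    (Finset.univ.filter
      (fun i : Fin ((s + 1) ^ 2) => ((C i).symm k : ℕ) = 0)).card = s + 1 := by
  set f : Fin (s+1) → ℕ := fun σ => (Finset.univ.filter
      (fun i : Fin ((s + 1) ^ 2) => ((C i).symm σ : ℕ) = 0)).card with hf
  have hge : ∀ σ : Fin (s+1), s + 1 ≤ f σ := by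
    intro σ
    have := hC s (by omega) σ (Finset.univ.erase σ) (Finset.notMem_erase _ _)
      (by rw [Finset.card_erase_of_mem (Finset.mem_univ _)]; simp)
    have heq : (Finset.univ.filter
        (fun i : Fin ((s + 1) ^ 2) => ∀ τ ∈ Finset.univ.erase σ,
          ((C i).symm σ : ℕ) < ((C i).symm τ : ℕ))).card = f σ := by
      congr 1
      apply Finset.filter_congr
      intro i _
      simpa using first_iff s (C i) σ
    omega
  have hsum : ∑ σ : Fin (s+1), f σ = (s+1)^2 := by
    simp only [hf, Finset.card_filter]
    rw [Finset.sum_comm]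
    have key : ∀ i : Fin ((s+1)^2), (∑ σ : Fin (s+1),
        if ((C i).symm σ : ℕ) = 0 then 1 else 0) = 1 := by
      intro i
      have hiff : ∀ σ : Fin (s+1), (((C i).symm σ : ℕ) = 0 ↔ σ = C i 0) := by
        intro σ
        rw [← Equiv.symm_apply_eq, Fin.ext_iff, Fin.val_zero]
      simp only [hiff]
      simp
    rw [Finset.sum_congr rfl (fun i _ => key i)]
    simp
  -- conclude
  have hle : ∀ σ ∈ Finset.univ, s + 1 ≤ f σ := fun σ _ => hge σ
  have hsum2 : ∑ _σ : Fin (s+1), (s+1) = (s+1)^2 := by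
    simp [Finset.sum_const]; ring
  have := (Finset.sum_eq_sum_iff_of_le hle).1 (by omega : (∑ σ : Fin (s+1), (s+1)) = ∑ σ, f σ)
  exact (this k (Finset.mem_univ _)).symm
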